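/- Let $N \geq 2$ and let $a : \{1, \ldots, N\} \to \mathbb{C}$. Let $\tau$ be uniformly distributed on $[T, 2T]$ with $T > 0$. Then $\mathbb{E}\left[\left|\sum_{n \leq N} a(n) n^{-i\tau}\right|^2\right] = \sum_{n \leq N} |a(n)|^2 + O\left(\frac{N}{T} \sum_{n \leq N} |a(n)|^2\right)$, where the implied constant is absolute. -/

import Mathlib

open MeasureTheory Real Finset

open Complex intervalIntegral

noncomputable def Gval (θ p q : ℝ) : ℂ :=
  if θ = 0 then ((q - p : ℝ) : ℂ)
  else (Complex.exp ((θ:ℂ) * Complex.I * q) - Complex.exp ((θ:ℂ) * Complex.I * p)) / ((θ:ℂ) * Complex.I)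

lemma abs_exp_ri (θ x : ℝ) : ‖Complex.exp ((θ:ℂ) * Complex.I * x)‖ = 1 := by
  rw [show (θ:ℂ) * Complex.I * x = ((θ * x : ℝ) : ℂ) * Complex.I by push_cast; ring]
  exact Complex.norm_exp_ofReal_mul_I _

lemma integral_exp_eq (θ p q : ℝ) :
    ∫ τ in p..q, Complex.exp ((θ:ℂ) * Complex.I * τ) = Gval θ p q := by
  rcases eq_or_ne θ 0 with h | h
  · simp [Gval, h, Complex.ofReal_sub]
  · have hc : (θ:ℂ) * Complex.I ≠ 0 := by
      simp [Complex.ext_iff, h]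
    rw [Gval, if_neg h]
    exact integral_exp_mul_complex hc

lemma norm_Gval_le (θ p q : ℝ) (hθ : θ ≠ 0) : ‖Gval θ p q‖ ≤ 2 / |θ| := by
  rw [Gval, if_neg hθ, norm_div]
  have h1 : ‖(θ:ℂ) * Complex.I‖ = |θ| := by
    simp [map_mul]
  rw [h1]
  gcongr
  calc ‖Complex.exp ((θ:ℂ) * Complex.I * q) - Complex.exp ((θ:ℂ) * Complex.I * p)‖
      ≤ ‖Complex.exp ((θ:ℂ) * Complex.I * q)‖ + ‖Complex.exp ((θ:ℂ) * Complex.I * p)‖ :=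
        norm_sub_le _ _
    _ ≤ 2 := by
        rw [abs_exp_ri, abs_exp_ri]; norm_num

lemma continuous_Gval_affine (θ u v d₁ d₂ : ℝ) :
    Continuous (fun s : ℝ => Gval θ (u + d₁ * s) (v + d₂ * s)) := by
  unfold Gval
  split_ifs with h
  · fun_prop
  · fun_prop

lemma Kdiag (u v d₁ d₂ Δ : ℝ) :
    ∫ s in (0:ℝ)..Δ, Gval 0 (u + d₁ * s) (v + d₂ * s)
      = (((v - u) * Δ + (d₂ - d₁) * Δ ^ 2 / 2 : ℝ) : ℂ) := by
  have h : ∀ s : ℝ, Gval 0 (u + d₁ * s) (v + d₂ * s)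
      = (((v - u) + (d₂ - d₁) * s : ℝ) : ℂ) := by
    intro s; rw [Gval, if_pos rfl]; norm_num; ring
  simp_rw [h]
  rw [intervalIntegral.integral_ofReal]
  norm_cast
  rw [intervalIntegral.integral_add intervalIntegrable_const
    ((by fun_prop : Continuous fun x : ℝ => (d₂ - d₁) * x).intervalIntegrable _ _),
    intervalIntegral.integral_const, intervalIntegral.integral_const_mul,
    integral_id]
  simp; ring

lemma int_exp_affine (θ x d Δ : ℝ) (hθ : θ ≠ 0) (hd : |d| = 1) :
    ‖∫ s in (0:ℝ)..Δ, Complex.exp ((θ:ℂ) * Complex.I * (x + d * s))‖ ≤ 2 / |θ| := by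
  have hrw : ∀ s : ℝ, Complex.exp ((θ:ℂ) * Complex.I * (x + d * s))
      = Complex.exp ((θ:ℂ) * Complex.I * x) * Complex.exp (((θ * d : ℝ):ℂ) * Complex.I * s) := by
    intro s; rw [← Complex.exp_add]; congr 1; push_cast; ring
  simp_rw [hrw]
  rw [intervalIntegral.integral_const_mul, norm_mul,
    show (θ:ℂ) * Complex.I * x = ((θ * x : ℝ):ℂ) * Complex.I by push_cast; ring,
    Complex.norm_exp_ofReal_mul_I, one_mul, integral_exp_eq]
  have hd0 : θ * d ≠ 0 := by
    intro h; rcases mul_eq_zero.mp h with h | h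
    · exact hθ h
    · rw [h] at hd; simp at hd
  calc ‖Gval (θ * d) 0 Δ‖ ≤ 2 / |θ * d| := norm_Gval_le (θ*d) 0 Δ hd0
    _ = 2 / |θ| := by rw [abs_mul, hd, mul_one]

lemma Kval_bound (θ u v d₁ d₂ Δ : ℝ) (hθ : θ ≠ 0) (h₁ : |d₁| = 1) (h₂ : |d₂| = 1) :
    ‖∫ s in (0:ℝ)..Δ, Gval θ (u + d₁ * s) (v + d₂ * s)‖ ≤ 4 / θ ^ 2 := by
  have hGv : ∀ s : ℝ, Gval θ (u + d₁ * s) (v + d₂ * s)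
      = (Complex.exp ((θ:ℂ) * Complex.I * (v + d₂ * s))
         - Complex.exp ((θ:ℂ) * Complex.I * (u + d₁ * s))) / ((θ:ℂ) * Complex.I) := by
    intro s; rw [Gval, if_neg hθ]; push_cast; ring_nf
  simp_rw [hGv, div_eq_mul_inv]
  rw [intervalIntegral.integral_mul_const,
    intervalIntegral.integral_sub ((Continuous.intervalIntegrable (by fun_prop) _ _)) ((Continuous.intervalIntegrable (by fun_prop) _ _)), norm_mul]
  have hden : ‖((θ:ℂ) * Complex.I)⁻¹‖ = |θ|⁻¹ := by
    rw [norm_inv]; simp [map_mul]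
  rw [hden]
  have h1 := int_exp_affine θ v d₂ Δ hθ h₂
  have h2 := int_exp_affine θ u d₁ Δ hθ h₁
  have habs : (0:ℝ) < |θ| := abs_pos.mpr hθ
  calc ‖(∫ s in (0:ℝ)..Δ, Complex.exp ((θ:ℂ)*Complex.I*(v + d₂*s)))
        - ∫ s in (0:ℝ)..Δ, Complex.exp ((θ:ℂ)*Complex.I*(u + d₁*s))‖ * |θ|⁻¹
      ≤ (2/|θ| + 2/|θ|) * |θ|⁻¹ := by
        gcongr
        exact (norm_sub_le _ _).trans (by gcongr)
    _ = 4 / θ^2 := by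
        rw [← _root_.sq_abs θ]; field_simp; ring

lemma sum_inv_sq_le (M : ℕ) : ∑ k ∈ Finset.Icc 1 M, (1:ℝ) / (k:ℝ)^2 ≤ 2 := by
  have key : ∀ M : ℕ, 1 ≤ M → ∑ k ∈ Finset.Icc 1 M, (1:ℝ) / (k:ℝ)^2 ≤ 2 - 1/(M:ℝ) := by
    intro M hM
    induction M, hM using Nat.le_induction with
    | base => norm_num
    | succ n hn ih =>
      rw [Finset.sum_Icc_succ_top (by omega : 1 ≤ n + 1)]
      have hn0 : (1:ℝ) ≤ (n:ℝ) := by exact_mod_cast hn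
      have h2 : (1:ℝ) / ((n:ℝ)+1)^2 ≤ 1/(n:ℝ) - 1/((n:ℝ)+1) := by
        rw [div_sub_div _ _ (by linarith) (by positivity)]
        rw [div_le_div_iff₀ (by positivity) (by positivity)]
        nlinarith
      push_cast
      calc ∑ k ∈ Finset.Icc 1 n, (1:ℝ)/(k:ℝ)^2 + 1/((n:ℝ)+1)^2
          ≤ (2 - 1/(n:ℝ)) + (1/(n:ℝ) - 1/((n:ℝ)+1)) := by gcongr
        _ = 2 - 1/((n:ℝ)+1) := by ring
  rcases Nat.eq_zero_or_pos M with h | h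
  · simp [h]
  · have h1 := key M h
    have h2 : (0:ℝ) ≤ 1/(M:ℝ) := by positivity
    linarith

lemma log_gap {n m N : ℕ} (h1 : 1 ≤ n) (hnm : n < m) (hmN : m ≤ N) :
    ((m:ℝ) - n) / N ≤ Real.log m - Real.log n := by
  have hn0 : (0:ℝ) < n := by exact_mod_cast h1
  have hm0 : (0:ℝ) < m := by exact_mod_cast (by omega : 0 < m)
  have hnm' : (n:ℝ) < m := by exact_mod_cast hnm
  have hN0 : (0:ℝ) < N := by exact_mod_cast (by omega : 1 ≤ N)
  have h := Real.log_le_sub_one_of_pos (x := (n:ℝ)/(m:ℝ)) (by positivity)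
  rw [Real.log_div (ne_of_gt hn0) (ne_of_gt hm0)] at h
  have hmN' : (m:ℝ) ≤ N := by exact_mod_cast hmN
  have step : ((m:ℝ) - n)/m ≤ Real.log m - Real.log n := by
    have h2 : (n:ℝ)/m - 1 = -(((m:ℝ)-n)/m) := by field_simp; ring
    rw [h2] at h
    linarith
  calc ((m:ℝ) - n)/N ≤ ((m:ℝ) - n)/m := by
        apply div_le_div_of_nonneg_left (by linarith) hm0 hmN'
    _ ≤ _ := step

lemma theta_sq_ge {n m N : ℕ} (hn : n ∈ Finset.Icc 1 N) (hm : m ∈ Finset.Icc 1 N) (hne : n ≠ m) :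
    ((n:ℝ) - m)^2 / (N:ℝ)^2 ≤ (Real.log m - Real.log n)^2 := by
  simp only [Finset.mem_Icc] at hn hm
  have hN0 : (0:ℝ) < N := by exact_mod_cast (by omega : 1 ≤ N)
  rcases lt_or_gt_of_ne hne with h | h
  · have hb := log_gap hn.1 h hm.2
    have hnm' : (n:ℝ) < m := by exact_mod_cast h
    have h1 : (0:ℝ) ≤ ((m:ℝ) - n)/N := div_nonneg (by linarith) hN0.le
    calc ((n:ℝ) - m)^2/(N:ℝ)^2 = (((m:ℝ)-n)/N)^2 := by ring
      _ ≤ (Real.log m - Real.log n)^2 := pow_le_pow_left₀ h1 hb 2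
  · have hb := log_gap hm.1 h hn.2
    have hnm' : (m:ℝ) < n := by exact_mod_cast h
    have h1 : (0:ℝ) ≤ ((n:ℝ) - m)/N := div_nonneg (by linarith) hN0.le
    calc ((n:ℝ) - m)^2/(N:ℝ)^2 = (((n:ℝ)-m)/N)^2 := by ring
      _ = (((n:ℝ)-m)/N)^2 := rfl
      _ ≤ (Real.log n - Real.log m)^2 := pow_le_pow_left₀ h1 hb 2
      _ = (Real.log m - Real.log n)^2 := by ring

lemma erase_sum_inv_sq {N n : ℕ} (hn : n ∈ Finset.Icc 1 N) :
    ∑ m ∈ (Finset.Icc 1 N).erase n, (1:ℝ)/((n:ℝ)-(m:ℝ))^2 ≤ 4 := by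
  simp only [Finset.mem_Icc] at hn
  classical
  set A := Finset.Icc 1 N
  set f : ℕ → ℝ := fun m => (1:ℝ)/((n:ℝ)-(m:ℝ))^2 with hf
  have hsplit := Finset.sum_filter_add_sum_filter_not (A.erase n) (fun m => m < n) f
  have hb : ∀ (s : Finset ℕ) (g : ℕ → ℕ), (∀ m ∈ s, g m ∈ A) →
      (∀ m ∈ s, ((g m : ℝ))^2 = ((n:ℝ)-(m:ℝ))^2) →
      (Set.InjOn g s) → ∑ m ∈ s, f m ≤ 2 := by
    intro s g hmem hval hinj
    have h1 : ∑ m ∈ s, f m = ∑ k ∈ s.image g, (1:ℝ)/(k:ℝ)^2 := by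
      rw [Finset.sum_image (fun x hx y hy h => hinj hx hy h)]
      apply Finset.sum_congr rfl
      intro m hm
      rw [hf]; simp only
      rw [← hval m hm]
    rw [h1]
    calc ∑ k ∈ s.image g, (1:ℝ)/(k:ℝ)^2 ≤ ∑ k ∈ A, (1:ℝ)/(k:ℝ)^2 := by
          apply Finset.sum_le_sum_of_subset_of_nonneg
          · intro k hk
            obtain ⟨m, hm, rfl⟩ := Finset.mem_image.mp hk
            exact hmem m hm
          · intro i _ _; positivity
      _ ≤ 2 := sum_inv_sq_le N
  have h1 : ∑ m ∈ (A.erase n).filter (fun m => m < n), f m ≤ 2 := by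
    apply hb _ (fun m => n - m)
    · intro m hm
      simp only [Finset.mem_filter, Finset.mem_erase, Finset.mem_Icc, A] at hm ⊢
      omega
    · intro m hm
      simp only [Finset.mem_filter, Finset.mem_erase, Finset.mem_Icc, A] at hm
      have : ((n - m : ℕ) : ℝ) = (n:ℝ) - m := by
        rw [Nat.cast_sub (by omega)]
      rw [this]
    · intro x hx y hy hxy
      simp only [Finset.coe_filter, Set.mem_setOf_eq, Finset.mem_erase, Finset.mem_Icc, A] at hx hy
      simp only at hxy
      omega
  have h2 : ∑ m ∈ (A.erase n).filter (fun m => ¬ m < n), f m ≤ 2 := by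
    apply hb _ (fun m => m - n)
    · intro m hm
      simp only [Finset.mem_filter, Finset.mem_erase, Finset.mem_Icc, A] at hm ⊢
      omega
    · intro m hm
      simp only [Finset.mem_filter, Finset.mem_erase, Finset.mem_Icc, A] at hm
      have : ((m - n : ℕ) : ℝ) = (m:ℝ) - n := by
        rw [Nat.cast_sub (by omega)]
      rw [this]; ring
    · intro x hx y hy hxy
      simp only [Finset.coe_filter, Set.mem_setOf_eq, Finset.mem_erase, Finset.mem_Icc, A] at hx hy
      simp only at hxy
      omega
  linarith

lemma hpt (N : ℕ) (a : ℕ → ℂ) (τ : ℝ) :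
    (((‖∑ n ∈ Finset.Icc 1 N, a n * Complex.exp (-(τ * Real.log n) * Complex.I)‖)^2 : ℝ) : ℂ)
      = ∑ n ∈ Finset.Icc 1 N, ∑ m ∈ Finset.Icc 1 N,
          (a n * (starRingEnd ℂ) (a m)) * Complex.exp (((Real.log m - Real.log n : ℝ) : ℂ) * Complex.I * τ) := by
  set S := ∑ n ∈ Finset.Icc 1 N, a n * Complex.exp (-(τ * Real.log n) * Complex.I) with hS
  have h1 : (((‖S‖)^2 : ℝ) : ℂ) = S * (starRingEnd ℂ) S := by
    rw [Complex.mul_conj, Complex.sq_norm]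
  rw [h1, hS, map_sum, Finset.sum_mul_sum]
  refine Finset.sum_congr rfl (fun n hn => ?_)
  refine Finset.sum_congr rfl (fun m hm => ?_)
  rw [map_mul, ← Complex.exp_conj]
  have hc : (starRingEnd ℂ) (-(↑τ * ↑(Real.log m)) * Complex.I) = (↑τ * ↑(Real.log m)) * Complex.I := by
    rw [map_mul, map_neg, map_mul, Complex.conj_ofReal, Complex.conj_ofReal, Complex.conj_I]
    ring
  rw [hc, mul_mul_mul_comm, ← Complex.exp_add]
  congr 1
  push_cast
  ring

lemma inner_c (N : ℕ) (a : ℕ → ℂ) (p q : ℝ) :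
    ((∫ τ in p..q, (‖∑ n ∈ Finset.Icc 1 N, a n * Complex.exp (-(τ * Real.log n) * Complex.I)‖)^2 : ℝ) : ℂ)
    = ∑ n ∈ Finset.Icc 1 N, ∑ m ∈ Finset.Icc 1 N,
        (a n * (starRingEnd ℂ) (a m)) * Gval (Real.log m - Real.log n) p q := by
  rw [← intervalIntegral.integral_ofReal]
  simp_rw [hpt N a]
  rw [intervalIntegral.integral_finset_sum (fun n _ => Continuous.intervalIntegrable (by fun_prop) _ _)]
  refine Finset.sum_congr rfl (fun n hn => ?_)
  rw [intervalIntegral.integral_finset_sum (fun m _ => Continuous.intervalIntegrable (by fun_prop) _ _)]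
  refine Finset.sum_congr rfl (fun m hm => ?_)
  rw [intervalIntegral.integral_const_mul, integral_exp_eq]

lemma key (N : ℕ) (a : ℕ → ℂ) (u v d₁ d₂ Δ : ℝ)
    (h₁ : |d₁| = 1) (h₂ : |d₂| = 1) (hN : 1 ≤ N) :
    |(∫ s in (0:ℝ)..Δ, ∫ τ in (u + d₁*s)..(v + d₂*s),
        (‖∑ n ∈ Finset.Icc 1 N, a n * Complex.exp (-(τ * Real.log n) * Complex.I)‖)^2)
      - ((v - u) * Δ + (d₂ - d₁) * Δ^2/2) * ∑ n ∈ Finset.Icc 1 N, (‖a n‖)^2|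
    ≤ 16 * (N:ℝ)^2 * ∑ n ∈ Finset.Icc 1 N, (‖a n‖)^2 := by
  classical
  set A := Finset.Icc 1 N with hA
  set Sa := ∑ n ∈ A, (‖a n‖)^2 with hSa
  set D := (v - u) * Δ + (d₂ - d₁) * Δ^2/2 with hD
  set K : ℕ → ℕ → ℂ := fun n m =>
    ∫ s in (0:ℝ)..Δ, Gval (Real.log m - Real.log n) (u + d₁*s) (v + d₂*s) with hK
  set c : ℕ → ℕ → ℂ := fun n m => a n * (starRingEnd ℂ) (a m) with hc
  have hθne : ∀ n ∈ A, ∀ m ∈ A, n ≠ m → Real.log m - Real.log n ≠ 0 := by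
    intro n hn m hm hne h0
    have h1 := theta_sq_ge hn hm hne
    rw [h0] at h1
    have hnm : (n:ℝ) ≠ (m:ℝ) := by exact_mod_cast hne
    have hN0 : (0:ℝ) < N := by
      have : 1 ≤ N := hN; exact_mod_cast (by omega : 0 < N)
    have : (0:ℝ) < ((n:ℝ) - m)^2 / (N:ℝ)^2 := by
      have : ((n:ℝ) - m) ≠ 0 := sub_ne_zero.mpr hnm
      positivity
    simp at h1; linarith
  -- Step 1: double integral equals double sum
  have step1 : ((∫ s in (0:ℝ)..Δ, ∫ τ in (u + d₁*s)..(v + d₂*s),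
      (‖∑ n ∈ A, a n * Complex.exp (-(τ * Real.log n) * Complex.I)‖)^2 : ℝ) : ℂ)
      = ∑ n ∈ A, ∑ m ∈ A, c n m * K n m := by
    rw [← intervalIntegral.integral_ofReal]
    rw [intervalIntegral.integral_congr (g := fun s => ∑ n ∈ A, ∑ m ∈ A,
        c n m * Gval (Real.log m - Real.log n) (u + d₁*s) (v + d₂*s))
        (fun s _ => inner_c N a _ _)]
    rw [intervalIntegral.integral_finset_sum (f := fun n s => ∑ m ∈ A,
        c n m * Gval (Real.log m - Real.log n) (u + d₁*s) (v + d₂*s)) (fun n _ => Continuous.intervalIntegrable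
        (continuous_finset_sum _ (fun m _ =>
          continuous_const.mul (continuous_Gval_affine _ _ _ _ _))) _ _)]
    refine Finset.sum_congr rfl fun n hn => ?_
    rw [intervalIntegral.integral_finset_sum (f := fun m s =>
        c n m * Gval (Real.log m - Real.log n) (u + d₁*s) (v + d₂*s)) (fun m _ => Continuous.intervalIntegrable
        (continuous_const.mul (continuous_Gval_affine _ _ _ _ _)) _ _)]
    refine Finset.sum_congr rfl fun m hm => ?_
    rw [intervalIntegral.integral_const_mul]
  -- diagonal terms
  have diag : ∀ n ∈ A, c n n * K n n = (((‖a n‖)^2 * D : ℝ) : ℂ) := by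
    intro n hn
    have hKnn : K n n = (D : ℂ) := by
      rw [hK]; simp only [sub_self]; rw [Kdiag]
    rw [hKnn, hc]
    simp only
    rw [Complex.mul_conj, Complex.normSq_eq_norm_sq]
    push_cast; ring
  have split : ∑ n ∈ A, ∑ m ∈ A, c n m * K n m
      = ((Sa * D : ℝ) : ℂ) + ∑ n ∈ A, ∑ m ∈ A.erase n, c n m * K n m := by
    rw [Finset.sum_congr rfl (fun n hn => (Finset.add_sum_erase A _ hn).symm),
        Finset.sum_add_distrib]
    congr 1
    rw [Finset.sum_congr rfl diag]
    push_cast [hSa]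
    rw [← Finset.sum_mul]
  set E := ∑ n ∈ A, ∑ m ∈ A.erase n, c n m * K n m with hE
  -- real part extraction
  have hre : (∫ s in (0:ℝ)..Δ, ∫ τ in (u + d₁*s)..(v + d₂*s),
      (‖∑ n ∈ A, a n * Complex.exp (-(τ * Real.log n) * Complex.I)‖)^2)
      - D * Sa = E.re := by
    have h2 := congrArg Complex.re (step1.trans split)
    simp only [Complex.ofReal_re, Complex.add_re] at h2
    rw [h2]; ring
  rw [hre]
  -- bound on E
  have hEbound : ‖E‖ ≤ 16 * (N:ℝ)^2 * Sa := by
    have step2 : ‖E‖ ≤ ∑ n ∈ A, ∑ m ∈ A.erase n,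
        (2*(N:ℝ)^2 * ((‖a n‖)^2 * (1/((n:ℝ)-m)^2))
          + 2*(N:ℝ)^2 * ((‖a m‖)^2 * (1/((n:ℝ)-m)^2))) := by
      refine (norm_sum_le _ _).trans ?_
      refine Finset.sum_le_sum fun n hn => ?_
      refine (norm_sum_le _ _).trans ?_
      refine Finset.sum_le_sum fun m hm => ?_
      obtain ⟨hmne, hmA⟩ := Finset.mem_erase.mp hm
      have hne : n ≠ m := fun h => hmne h.symm
      have hθ0 := hθne n hn m hmA hne
      have hKb : ‖K n m‖ ≤ 4 / (Real.log m - Real.log n)^2 := Kval_bound _ _ _ _ _ _ hθ0 h₁ h₂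
      have hts := theta_sq_ge hn hmA hne
      have hnm0 : (0:ℝ) < ((n:ℝ)-(m:ℝ))^2 := by
        have h' : (n:ℝ) ≠ (m:ℝ) := by exact_mod_cast hne
        have : ((n:ℝ) - m) ≠ 0 := sub_ne_zero.mpr h'
        positivity
      have hN0 : (0:ℝ) < N := by exact_mod_cast (by omega : 0 < N)
      have hθsq : (0:ℝ) < (Real.log m - Real.log n)^2 := by positivity
      have h4 : 4 / (Real.log m - Real.log n)^2 ≤ 4 * (N:ℝ)^2 / ((n:ℝ)-m)^2 := by
        rw [div_le_div_iff₀ hθsq hnm0]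
        have h5 : ((n:ℝ)-m)^2 ≤ (N:ℝ)^2 * (Real.log m - Real.log n)^2 := by
          rw [div_le_iff₀ (by positivity)] at hts
          linarith [hts]
        nlinarith
      have hcn : ‖c n m * K n m‖ = ‖a n‖ * ‖a m‖ * ‖K n m‖ := by
        rw [norm_mul, hc]
        simp only [norm_mul, Complex.norm_conj]
      calc ‖c n m * K n m‖
          ≤ ‖a n‖ * ‖a m‖ * (4*(N:ℝ)^2/((n:ℝ)-m)^2) := by
            rw [hcn]
            have hKb' := hKb.trans h4
            have : (0:ℝ) ≤ ‖a n‖ * ‖a m‖ := by positivity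
            exact mul_le_mul_of_nonneg_left hKb' this
        _ ≤ ((‖a n‖)^2 + (‖a m‖)^2)/2 * (4*(N:ℝ)^2/((n:ℝ)-m)^2) := by
            have : ‖a n‖ * ‖a m‖
                ≤ ((‖a n‖)^2 + (‖a m‖)^2)/2 := by
              nlinarith [sq_nonneg (‖a n‖ - ‖a m‖)]
            exact mul_le_mul_of_nonneg_right this (by positivity)
        _ = 2*(N:ℝ)^2 * ((‖a n‖)^2 * (1/((n:ℝ)-m)^2))
            + 2*(N:ℝ)^2 * ((‖a m‖)^2 * (1/((n:ℝ)-m)^2)) := by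
            field_simp; ring
    refine step2.trans ?_
    simp only [Finset.sum_add_distrib]
    have hP : ∑ n ∈ A, ∑ m ∈ A.erase n,
        2*(N:ℝ)^2 * ((‖a n‖)^2 * (1/((n:ℝ)-m)^2)) ≤ 8 * (N:ℝ)^2 * Sa := by
      have : ∀ n ∈ A, ∑ m ∈ A.erase n,
          2*(N:ℝ)^2 * ((‖a n‖)^2 * (1/((n:ℝ)-m)^2))
          ≤ 2*(N:ℝ)^2 * (‖a n‖)^2 * 4 := by
        intro n hn
        calc ∑ m ∈ A.erase n, 2*(N:ℝ)^2 * ((‖a n‖)^2 * (1/((n:ℝ)-m)^2))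
            = 2*(N:ℝ)^2 * (‖a n‖)^2 * ∑ m ∈ A.erase n, (1:ℝ)/((n:ℝ)-m)^2 := by
              rw [Finset.mul_sum]; exact Finset.sum_congr rfl fun m _ => by ring
          _ ≤ 2*(N:ℝ)^2 * (‖a n‖)^2 * 4 :=
              mul_le_mul_of_nonneg_left (erase_sum_inv_sq hn) (by positivity)
      refine (Finset.sum_le_sum this).trans ?_
      rw [hSa, Finset.mul_sum]
      apply le_of_eq
      refine Finset.sum_congr rfl fun n hn => ?_
      ring
    have hQ : ∑ n ∈ A, ∑ m ∈ A.erase n,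
        2*(N:ℝ)^2 * ((‖a m‖)^2 * (1/((n:ℝ)-m)^2)) ≤ 8 * (N:ℝ)^2 * Sa := by
      rw [Finset.sum_comm' (t' := A) (s' := fun m => A.erase m)
        (by intro x y; simp [Finset.mem_erase]; tauto)]
      have : ∀ m ∈ A, ∑ n ∈ A.erase m,
          2*(N:ℝ)^2 * ((‖a m‖)^2 * (1/((n:ℝ)-m)^2))
          ≤ 2*(N:ℝ)^2 * (‖a m‖)^2 * 4 := by
        intro m hm
        calc ∑ n ∈ A.erase m, 2*(N:ℝ)^2 * ((‖a m‖)^2 * (1/((n:ℝ)-m)^2))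
            = 2*(N:ℝ)^2 * (‖a m‖)^2 * ∑ n ∈ A.erase m, (1:ℝ)/((m:ℝ)-n)^2 := by
              rw [Finset.mul_sum]
              refine Finset.sum_congr rfl fun n _ => ?_
              rw [show ((m:ℝ)-n)^2 = ((n:ℝ)-m)^2 by ring]; ring
          _ ≤ 2*(N:ℝ)^2 * (‖a m‖)^2 * 4 :=
              mul_le_mul_of_nonneg_left (erase_sum_inv_sq hm) (by positivity)
      refine (Finset.sum_le_sum this).trans ?_
      rw [hSa, Finset.mul_sum]
      apply le_of_eq
      refine Finset.sum_congr rfl fun n hn => ?_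
      ring
    linarith
  calc |E.re| ≤ ‖E‖ := Complex.abs_re_le_norm E
    _ ≤ 16 * (N:ℝ)^2 * Sa := hEbound

lemma mono_int {f : ℝ → ℝ} (hfc : Continuous f) (hf0 : ∀ τ, 0 ≤ f τ) {p' p q q' : ℝ}
    (h1 : p' ≤ p) (h2 : p ≤ q) (h3 : q ≤ q') :
    ∫ τ in p..q, f τ ≤ ∫ τ in p'..q', f τ := by
  rw [intervalIntegral.integral_of_le h2,
      intervalIntegral.integral_of_le (le_trans (le_trans h1 h2) h3)]
  apply MeasureTheory.setIntegral_mono_set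
  · exact hfc.integrableOn_Ioc
  · exact ae_of_all _ hf0
  · exact (Set.Ioc_subset_Ioc h1 h3).eventuallyLE

/-- Mean value theorem for Dirichlet polynomials: there is an absolute constant `C > 0` such
that for `N ≥ 2`, `T > 0` and coefficients `a : ℕ → ℂ`, the average of
`|∑_{n ≤ N} a(n) n^{-iτ}|²` over `τ ∈ [T, 2T]` equals `∑_{n ≤ N} |a(n)|²` up to an error at
most `C (N/T) ∑_{n ≤ N} |a(n)|²`. -/
theorem dirichlet_mean_value_theorem :
    ∃ C : ℝ, 0 < C ∧
      ∀ (N : ℕ) (T : ℝ) (a : ℕ → ℂ), 2 ≤ N → 0 < T →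
      |(T⁻¹ * ∫ τ in Set.Icc T (2 * T),
          (‖∑ n ∈ Finset.Icc 1 N,
              a n * Complex.exp (-(τ * Real.log n) * Complex.I)‖) ^ 2)
        - ∑ n ∈ Finset.Icc 1 N, (‖a n‖) ^ 2|
        ≤ C * ((N : ℝ) / T) * ∑ n ∈ Finset.Icc 1 N, (‖a n‖) ^ 2 := by
  classical
  refine ⟨20, by norm_num, ?_⟩
  intro N T a hN hT
  have hN0 : (0:ℝ) < N := by exact_mod_cast (by omega : 0 < N)
  have hN2 : (2:ℝ) ≤ N := by exact_mod_cast hN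
  set A := Finset.Icc 1 N with hA
  set f : ℝ → ℝ := fun τ => (‖∑ n ∈ A,
      a n * Complex.exp (-(τ * Real.log n) * Complex.I)‖) ^ 2 with hf
  set Sa := ∑ n ∈ A, (‖a n‖) ^ 2 with hSa
  have hfc : Continuous f := by
    rw [hf]
    have h := (continuous_norm.comp (show Continuous (fun τ : ℝ =>
      ∑ n ∈ A, a n * Complex.exp (-(τ * Real.log n) * Complex.I)) by fun_prop))
    exact h.pow 2
  have hf0 : ∀ τ, 0 ≤ f τ := fun τ => by rw [hf]; positivity
  have hSa0 : 0 ≤ Sa := Finset.sum_nonneg fun n _ => by positivity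
  set Itg := ∫ τ in T..(2*T), f τ with hItg
  have hgoal : (∫ τ in Set.Icc T (2*T), f τ) = Itg := by
    rw [MeasureTheory.integral_Icc_eq_integral_Ioc, hItg,
      intervalIntegral.integral_of_le (by linarith)]
  rw [hgoal]
  -- continuity of the shifted inner integrals
  have hIRc : ∀ d₁ d₂ : ℝ, Continuous (fun s : ℝ => ∫ τ in (T + d₁*s)..(2*T + d₂*s), f τ) := by
    intro d₁ d₂
    have heq : (fun s : ℝ => ∫ τ in (T + d₁*s)..(2*T + d₂*s), f τ)
        = fun s => (∑ n ∈ A, ∑ m ∈ A, (a n * (starRingEnd ℂ) (a m)) *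
            Gval (Real.log m - Real.log n) (T + d₁*s) (2*T + d₂*s)).re := by
      funext s
      have h := inner_c N a (T + d₁*s) (2*T + d₂*s)
      rw [← h, Complex.ofReal_re]
    rw [heq]
    exact Complex.continuous_re.comp (continuous_finset_sum _ fun n _ =>
      continuous_finset_sum _ fun m _ =>
        continuous_const.mul (continuous_Gval_affine _ _ _ _ _))
  -- majorant
  have hmaj : Itg ≤ T * Sa + 17 * (N:ℝ) * Sa := by
    have hkey := key N a T (2*T) (-1) 1 (N:ℝ) (by simp) (by simp) (by omega)
    have h1 : (N:ℝ) * Itg ≤ ∫ s in (0:ℝ)..(N:ℝ), ∫ τ in (T + (-1)*s)..(2*T + 1*s), f τ := by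
      have hm := intervalIntegral.integral_mono_on (μ := volume) (by positivity : (0:ℝ) ≤ N)
        (_root_.intervalIntegrable_const (c := Itg))
        ((hIRc (-1) 1).intervalIntegrable _ _)
        (fun s hs => by
          rw [hItg]
          exact mono_int hfc hf0 (by nlinarith [hs.1] : T + (-1)*s ≤ T) (by linarith)
            (by nlinarith [hs.1] : 2*T ≤ 2*T + 1*s))
      simpa using hm
    have h2 := (abs_le.mp hkey).2
    have hD : (2*T - T) * (N:ℝ) + (1 - (-1)) * (N:ℝ)^2/2 = T*(N:ℝ) + (N:ℝ)^2 := by ring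
    rw [hD] at h2
    have h3 : (N:ℝ) * Itg ≤ (T*(N:ℝ) + (N:ℝ)^2) * Sa + 16*(N:ℝ)^2*Sa := le_trans h1 (by linarith)
    have h4 : (N:ℝ) * Itg ≤ (N:ℝ) * (T * Sa + 17 * (N:ℝ) * Sa) := by nlinarith
    exact le_of_mul_le_mul_left h4 hN0
  -- minorant
  have hmin : T * Sa - 17 * (N:ℝ) * Sa ≤ Itg := by
    rcases le_or_gt (2*(N:ℝ)) T with hTl | hTs
    · have hkey := key N a T (2*T) 1 (-1) (N:ℝ) (by simp) (by simp) (by omega)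
      have h1 : (∫ s in (0:ℝ)..(N:ℝ), ∫ τ in (T + 1*s)..(2*T + (-1)*s), f τ) ≤ (N:ℝ) * Itg := by
        have hm := intervalIntegral.integral_mono_on (μ := volume) (by positivity : (0:ℝ) ≤ N)
          ((hIRc 1 (-1)).intervalIntegrable _ _)
          (_root_.intervalIntegrable_const (c := Itg))
          (fun s hs => by
            rw [hItg]
            exact mono_int hfc hf0 (by nlinarith [hs.1] : T ≤ T + 1*s)
              (by nlinarith [hs.1, hs.2] : T + 1*s ≤ 2*T + (-1)*s)
              (by nlinarith [hs.1] : 2*T + (-1)*s ≤ 2*T))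
        simpa using hm
      have h2 := (abs_le.mp hkey).1
      have hD : (2*T - T) * (N:ℝ) + ((-1) - 1) * (N:ℝ)^2/2 = T*(N:ℝ) - (N:ℝ)^2 := by ring
      rw [hD] at h2
      have h3 : (T*(N:ℝ) - (N:ℝ)^2) * Sa - 16*(N:ℝ)^2*Sa ≤ (N:ℝ) * Itg := le_trans (by linarith) h1
      have h4 : (N:ℝ) * (T * Sa - 17 * (N:ℝ) * Sa) ≤ (N:ℝ) * Itg := by nlinarith
      exact le_of_mul_le_mul_left h4 hN0
    · have hpos : 0 ≤ Itg := by
        rw [hItg]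
        apply intervalIntegral.integral_nonneg (by linarith)
        intro x _; exact hf0 x
      nlinarith
  -- final assembly
  have habs : |Itg - T * Sa| ≤ 17 * (N:ℝ) * Sa := abs_le.mpr ⟨by linarith, by linarith⟩
  have hsplit : T⁻¹ * Itg - Sa = T⁻¹ * (Itg - T * Sa) := by field_simp
  rw [hsplit, abs_mul, abs_of_pos (inv_pos.mpr hT)]
  calc T⁻¹ * |Itg - T * Sa| ≤ T⁻¹ * (17 * (N:ℝ) * Sa) := by
        exact mul_le_mul_of_nonneg_left habs (by positivity)
    _ ≤ 20 * ((N:ℝ)/T) * Sa := by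
        rw [div_eq_mul_inv]
        have h20 : T⁻¹ * (17 * (N:ℝ) * Sa) = 17 * ((N:ℝ) * T⁻¹) * Sa := by ring
        rw [h20]
        have : (0:ℝ) ≤ (N:ℝ) * T⁻¹ * Sa := by positivity
        nlinarith
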